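/- Let F be a field of characteristic 2 and let B be a k×k matrix over F whose characteristic polynomial is irreducible over F. If D is a k×k matrix with D² = I_k and DB = BD, then D = I_k. -/

import Mathlib

open Polynomial Matrix

theorem stmt_11 {F : Type*} [Field F] (hF : ringChar F = 2) {k : ℕ}
    (B : Matrix (Fin k) (Fin k) F) (hB : Irreducible B.charpoly)
    (D : Matrix (Fin k) (Fin k) F) (hD : D * D = 1) (hDB : D * B = B * D) :
    D = 1 := by
  haveI : CharP F 2 := ringChar.of_eq hF
  have h2 : (2 : F) = 0 := CharP.cast_eq_zero F 2
  set N : Matrix (Fin k) (Fin k) F := D - 1 with hN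
  -- N² = 0 in characteristic 2
  have hN2 : N * N = 0 := by
    have e1 : N * N = D * D - D - D + 1 := by rw [hN]; noncomm_ring
    rw [e1, hD]
    have e2 : (1 : Matrix (Fin k) (Fin k) F) - D - D + 1 = (2 : F) • (1 - D) := by
      rw [two_smul]; abel
    rw [e2, h2, zero_smul]
  -- N commutes with B
  have hNB : Commute N B := by
    simp only [hN, Commute, SemiconjBy, sub_mul, mul_sub, one_mul, mul_one, hDB]
  suffices hN0 : N = 0 by
    have := sub_eq_zero.mp hN0
    exact this
  by_contra hne
  -- find w with N *ᵥ w ≠ 0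
  have : ∃ w : Fin k → F, N *ᵥ w ≠ 0 := by
    by_contra h
    push_neg at h
    apply hne
    ext i j
    have := congrFun (h (Pi.single j 1)) i
    simpa [Matrix.mulVec_single] using this
  obtain ⟨w, hw⟩ := this
  set v : Fin k → F := N *ᵥ w with hv
  have hNv : N *ᵥ v = 0 := by
    rw [hv, Matrix.mulVec_mulVec, hN2, Matrix.zero_mulVec]
  have hk : 0 < k := by
    rcases Nat.eq_zero_or_pos k with h0 | h
    · exfalso; apply hw; subst h0; ext i; exact absurd i.2 (Nat.not_lt_zero _)
    · exact h
  -- each B^i *ᵥ v lies in ker N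
  have hker : ∀ i : ℕ, (B ^ i) *ᵥ v ∈ LinearMap.ker (Matrix.mulVecLin N) := by
    intro i
    have hc : N * B ^ i = B ^ i * N := (hNB.pow_right i).eq
    rw [LinearMap.mem_ker, Matrix.mulVecLin_apply, Matrix.mulVec_mulVec, hc,
      ← Matrix.mulVec_mulVec, hNv, Matrix.mulVec_zero]
  -- if aeval B p *ᵥ v = 0 with natDegree p < k then p = 0
  have key : ∀ p : F[X], p.natDegree < k → (aeval B p) *ᵥ v = 0 → p = 0 := by
    intro p hdeg hp0
    by_contra hp
    have hnd : ¬ B.charpoly ∣ p := by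
      intro hdvd
      have := Polynomial.natDegree_le_of_dvd hdvd hp
      rw [Matrix.charpoly_natDegree_eq_dim, Fintype.card_fin] at this
      omega
    have hcop : IsCoprime B.charpoly p := hB.coprime_iff_not_dvd.mpr hnd
    obtain ⟨a, b, hab⟩ := hcop
    have hab' : aeval B a * aeval B B.charpoly + aeval B b * aeval B p = 1 := by
      simpa only [_root_.map_mul, map_add, _root_.map_one] using congrArg (aeval B) hab
    rw [Matrix.aeval_self_charpoly, mul_zero, zero_add] at hab'
    apply hw
    calc v = (1 : Matrix (Fin k) (Fin k) F) *ᵥ v := (Matrix.one_mulVec v).symm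
      _ = (aeval B b * aeval B p) *ᵥ v := by rw [hab']
      _ = aeval B b *ᵥ ((aeval B p) *ᵥ v) := (Matrix.mulVec_mulVec v _ _).symm
      _ = 0 := by rw [hp0, Matrix.mulVec_zero]
  -- the vectors B^i *ᵥ v, i < k, are linearly independent
  have hli : LinearIndependent F (fun i : Fin k => (B ^ (i : ℕ)) *ᵥ v) := by
    rw [Fintype.linearIndependent_iff]
    intro g hg
    set p : F[X] := ∑ i : Fin k, Polynomial.monomial (i : ℕ) (g i) with hpdef
    have haev : (aeval B p) *ᵥ v = 0 := by
      rw [hpdef, map_sum]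
      have hsum : ∀ (s : Finset (Fin k)) (M : Fin k → Matrix (Fin k) (Fin k) F),
          (∑ i ∈ s, M i) *ᵥ v = ∑ i ∈ s, M i *ᵥ v := by
        intro s M
        induction s using Finset.cons_induction with
        | empty => simp [Matrix.zero_mulVec]
        | cons a s ha ih => rw [Finset.sum_cons, Finset.sum_cons,
            Matrix.add_mulVec, ih]
      rw [hsum]
      have hterm : ∀ i : Fin k, (aeval B) (Polynomial.monomial (i : ℕ) (g i)) *ᵥ v
          = g i • (B ^ (i : ℕ) *ᵥ v) := by
        intro i
        rw [Polynomial.aeval_monomial, ← Algebra.smul_def, Matrix.smul_mulVec]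
      simp only [hterm]
      exact hg
    have hdeg : p.natDegree < k := by
      have : p.natDegree ≤ k - 1 := by
        apply Polynomial.natDegree_sum_le_of_forall_le
        intro i _
        exact le_trans (Polynomial.natDegree_monomial_le _) (by omega)
      omega
    have hp0 : p = 0 := key p hdeg haev
    intro i
    have := congrArg (fun q => Polynomial.coeff q (i : ℕ)) hp0
    simp only [hpdef, Polynomial.finset_sum_coeff, Polynomial.coeff_monomial,
      Polynomial.coeff_zero] at this
    rwa [Finset.sum_eq_single i (fun j _ hji => by
      rw [if_neg (fun h => hji (Fin.ext h))]) (fun h => absurd (Finset.mem_univ i) h),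
      if_pos rfl] at this
  -- promote to a family inside ker N
  have hli' : LinearIndependent F
      (fun i : Fin k => (⟨(B ^ (i : ℕ)) *ᵥ v, hker i⟩ : LinearMap.ker (Matrix.mulVecLin N))) := by
    apply LinearIndependent.of_comp (LinearMap.ker (Matrix.mulVecLin N)).subtype
    convert hli <;> rfl
  have hcard : k ≤ Module.finrank F (LinearMap.ker (Matrix.mulVecLin N)) := by
    simpa using hli'.fintype_card_le_finrank
  have htop : LinearMap.ker (Matrix.mulVecLin N) = ⊤ := by
    apply Submodule.eq_top_of_finrank_eq
    have hle := Submodule.finrank_le (LinearMap.ker (Matrix.mulVecLin N))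
    simp only [Module.finrank_pi, Fintype.card_fin] at *
    omega
  have : N *ᵥ w = 0 := by
    have := htop ▸ Submodule.mem_top (x := w)
    simpa [LinearMap.mem_ker] using this
  exact hw this
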